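/- Let A, B, C be three balls in ℝ^d such that A and B are concentric, A and C are externally tangent, A and C both have radius r > 0, and B has radius √5·r. Then the volume (Lebesgue measure) of B ∩ C is at least half the volume of A. -/
import Mathlib


open MeasureTheory Metric

/-- Lemma (√5-tangent): if `A = closedBall a r` and `C = closedBall c r` are externally
tangent balls of radius `r > 0` in `ℝ^d`, and `B = closedBall a (√5·r)` is concentric with `A`,
then the volume of `B ∩ C` is at least half the volume of `A`. -/
theorem stmt_0 (d : ℕ) (a c : EuclideanSpace ℝ (Fin d)) (r : ℝ) (hr : 0 < r)
    (htan : dist a c = 2 * r) :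
    volume (closedBall a r) ≤
      2 * volume (closedBall a (Real.sqrt 5 * r) ∩ closedBall c r) := by
  set u : EuclideanSpace ℝ (Fin d) := a - c with hu
  set H : Set (EuclideanSpace ℝ (Fin d)) := {x | 0 ≤ inner (x - c) u (𝕜 := ℝ)} with hH
  set S : Set (EuclideanSpace ℝ (Fin d)) := closedBall c r with hS
  -- half ball is contained in B ∩ C
  have hsub : S ∩ H ⊆ closedBall a (Real.sqrt 5 * r) ∩ closedBall c r := by
    rintro x ⟨hxS, hxH⟩
    refine ⟨?_, hxS⟩
    have hxH' : (0:ℝ) ≤ inner (x - c) u (𝕜 := ℝ) := hxH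
    have hxc : ‖x - c‖ ≤ r := by
      simpa [hS, mem_closedBall, dist_eq_norm] using hxS
    have huu : ‖u‖ = 2 * r := by
      rw [hu, ← dist_eq_norm]; exact htan
    have hsq : ‖x - a‖ ^ 2 ≤ 5 * r ^ 2 := by
      have hxa : x - a = (x - c) - u := by rw [hu]; abel
      have hns := norm_sub_sq_real (x - c) u
      rw [hxa, hns, huu]
      have h1 : ‖x - c‖ ^ 2 ≤ r ^ 2 := by
        have := pow_le_pow_left₀ (norm_nonneg _) hxc 2
        simpa using this
      nlinarith
    have h5 : (0:ℝ) ≤ Real.sqrt 5 * r := by positivity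
    have hle : ‖x - a‖ ≤ Real.sqrt 5 * r := by
      have h2 : (Real.sqrt 5 * r) ^ 2 = 5 * r ^ 2 := by
        rw [mul_pow, Real.sq_sqrt (by norm_num : (0:ℝ) ≤ 5)]
      nlinarith [norm_nonneg (x - a)]
    simpa [mem_closedBall, dist_eq_norm] using hle
  -- reflection through c
  set f : EuclideanSpace ℝ (Fin d) → EuclideanSpace ℝ (Fin d) :=
    fun x => (2:ℝ) • c - x with hf
  have hmeasH : MeasurableSet H := by
    have hcont : Continuous fun x : EuclideanSpace ℝ (Fin d) =>
        inner (x - c) u (𝕜 := ℝ) :=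
      (continuous_id.sub continuous_const).inner continuous_const
    exact measurableSet_le measurable_const hcont.measurable
  have hmeasS : MeasurableSet S := measurableSet_closedBall
  have hrefl : S \ H ⊆ f ⁻¹' (S ∩ H) := by
    rintro x ⟨hxS, hxH⟩
    constructor
    · have hdist : dist (f x) c = dist x c := by
        simp only [hf, dist_eq_norm]
        have h3 : (2:ℝ) • c - x - c = -(x - c) := by
          rw [two_smul]; abel
        rw [h3, norm_neg]
      show f x ∈ closedBall c r
      rw [mem_closedBall, hdist]
      exact hxS
    · have hlt : inner (x - c) u (𝕜 := ℝ) < 0 := not_le.mp hxH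
      have h4 : f x - c = -(x - c) := by
        simp only [hf, two_smul]; abel
      show (0:ℝ) ≤ inner (f x - c) u (𝕜 := ℝ)
      rw [h4, inner_neg_left]
      linarith
  -- f preserves volume
  have hfmp : MeasurePreserving f volume volume := by
    have h1 : MeasurePreserving (fun x : EuclideanSpace ℝ (Fin d) => (2:ℝ) • c + x)
        volume volume := measurePreserving_add_left volume _
    have h2 : MeasurePreserving (Neg.neg : EuclideanSpace ℝ (Fin d) → _)
        volume volume := Measure.measurePreserving_neg volume
    have : f = (fun x : EuclideanSpace ℝ (Fin d) => (2:ℝ) • c + x) ∘ Neg.neg := by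
      funext x; simp [hf, sub_eq_add_neg]
    rw [this]
    exact h1.comp h2
  have h1 : volume (S \ H) ≤ volume (S ∩ H) := by
    calc volume (S \ H) ≤ volume (f ⁻¹' (S ∩ H)) := measure_mono hrefl
      _ = volume (S ∩ H) := hfmp.measure_preimage (hmeasS.inter hmeasH).nullMeasurableSet
  have hC : volume S ≤ 2 * volume (S ∩ H) := by
    calc volume S ≤ volume (S ∩ H) + volume (S \ H) :=
          measure_le_inter_add_diff _ _ _
      _ ≤ volume (S ∩ H) + volume (S ∩ H) := by gcongr
      _ = 2 * volume (S ∩ H) := (two_mul _).symm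
  have hAC : volume (closedBall a r) = volume S := by
    have hpre : (fun x : EuclideanSpace ℝ (Fin d) => x + (a - c)) ⁻¹' closedBall a r = S := by
      ext x
      have h5 : x + (a - c) - a = x - c := by abel
      simp [hS, mem_closedBall, dist_eq_norm, h5]
    rw [← hpre, measure_preimage_add_right]
  calc volume (closedBall a r) = volume S := hAC
    _ ≤ 2 * volume (S ∩ H) := hC
    _ ≤ 2 * volume (closedBall a (Real.sqrt 5 * r) ∩ closedBall c r) :=
        mul_le_mul_right (measure_mono hsub) 2
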